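/- If R is a Boolean ring and σ is a ring endomorphism of R, then R[t;σ]/(t²) is left morphic if and only if σ is the identity. -/

import Mathlib

/-- `R[t;σ]/(t²)`, the trivial extension `R ⋉ R(σ)`: pairs `(a, m)` with
multiplication `(a,m)(b,n) = (ab, an + mσ(b))`. -/
def SkewTriv (R : Type*) [Ring R] (σ : R →+* R) : Type _ := R × R

namespace SkewTriv

variable {R : Type*} [Ring R] {σ : R →+* R}

/-- The element `(a, m)` of `SkewTriv R σ`. -/
def mk (σ : R →+* R) (a m : R) : SkewTriv R σ := (a, m)

instance : AddCommGroup (SkewTriv R σ) := inferInstanceAs (AddCommGroup (R × R))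

instance : Mul (SkewTriv R σ) :=
  ⟨fun x y => mk σ (x.1 * y.1) (x.1 * y.2 + x.2 * σ y.1)⟩

instance : One (SkewTriv R σ) := ⟨mk σ 1 0⟩

theorem one_def : (1 : SkewTriv R σ) = mk σ 1 0 := rfl

theorem zero_def : (0 : SkewTriv R σ) = mk σ 0 0 := rfl

theorem mul_def (x y : SkewTriv R σ) :
    x * y = mk σ (x.1 * y.1) (x.1 * y.2 + x.2 * σ y.1) := rfl

theorem add_def (x y : SkewTriv R σ) :
    x + y = mk σ (x.1 + y.1) (x.2 + y.2) := rfl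

instance : Ring (SkewTriv R σ) :=
  { (inferInstance : AddCommGroup (SkewTriv R σ)), (inferInstance : Mul (SkewTriv R σ)),
      (inferInstance : One (SkewTriv R σ)) with
    mul_assoc := by
      intro x y z
      apply Prod.ext
      · show x.1 * y.1 * z.1 = x.1 * (y.1 * z.1)
        exact mul_assoc _ _ _
      · show x.1 * y.1 * z.2 + (x.1 * y.2 + x.2 * σ y.1) * σ z.1 =
          x.1 * (y.1 * z.2 + y.2 * σ z.1) + x.2 * σ (y.1 * z.1)
        simp only [mul_add, add_mul, map_mul, mul_assoc]
        abel
    one_mul := by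
      intro x
      apply Prod.ext
      · show 1 * x.1 = x.1
        simp
      · show 1 * x.2 + 0 * σ x.1 = x.2
        simp
    mul_one := by
      intro x
      apply Prod.ext
      · show x.1 * 1 = x.1
        simp
      · show x.1 * 0 + x.2 * σ 1 = x.2
        simp
    left_distrib := by
      intro x y z
      apply Prod.ext
      · show x.1 * (y.1 + z.1) = x.1 * y.1 + x.1 * z.1
        exact mul_add _ _ _
      · show x.1 * (y.2 + z.2) + x.2 * σ (y.1 + z.1) =
          (x.1 * y.2 + x.2 * σ y.1) + (x.1 * z.2 + x.2 * σ z.1)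
        simp only [mul_add, map_add]
        abel
    right_distrib := by
      intro x y z
      apply Prod.ext
      · show (x.1 + y.1) * z.1 = x.1 * z.1 + y.1 * z.1
        exact add_mul _ _ _
      · show (x.1 + y.1) * z.2 + (x.2 + y.2) * σ z.1 =
          (x.1 * z.2 + x.2 * σ z.1) + (y.1 * z.2 + y.2 * σ z.1)
        simp only [add_mul]
        abel
    zero_mul := by
      intro x
      apply Prod.ext
      · show 0 * x.1 = 0
        simp
      · show 0 * x.2 + 0 * σ x.1 = 0
        simp
    mul_zero := by
      intro x
      apply Prod.ext
      · show x.1 * 0 = 0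
        simp
      · show x.1 * 0 + x.2 * σ 0 = 0
        simp }

end SkewTriv

/-- A ring `S` is left morphic if every element `x` admits `y` with
`ann_l(x) = Sy` and `ann_l(y) = Sx`. -/
def IsLeftMorphicRing (S : Type*) [Ring S] : Prop :=
  ∀ x : S, ∃ y : S, ({z : S | z * x = 0} = {z : S | ∃ w, z = w * y}) ∧
    ({z : S | z * y = 0} = {z : S | ∃ w, z = w * x})

section Aux
variable {R : Type*} [Ring R] {σ : R →+* R}

theorem SkewTriv.mul_eq_zero_iff (z x : SkewTriv R σ) :
    z * x = 0 ↔ z.1 * x.1 = 0 ∧ z.1 * x.2 + z.2 * σ x.1 = 0 := by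
  rw [SkewTriv.mul_def, SkewTriv.zero_def]
  exact Prod.ext_iff

theorem SkewTriv.eq_mul_iff (z w y : SkewTriv R σ) :
    z = w * y ↔ z.1 = w.1 * y.1 ∧ z.2 = w.1 * y.2 + w.2 * σ y.1 := by
  rw [SkewTriv.mul_def]
  exact Prod.ext_iff

end Aux

/-- If `R` is a Boolean ring and `σ` is a ring endomorphism of `R`, then
`R[t;σ]/(t²)` is left morphic if and only if `σ` is the identity. -/
theorem stmt11 {R : Type*} [BooleanRing R] (σ : R →+* R) :
    IsLeftMorphicRing (SkewTriv R σ) ↔ σ = RingHom.id R := by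
  have idem : ∀ x : R, x * x = x := BooleanRing.mul_self
  constructor
  · intro H
    ext e
    simp only [RingHom.id_apply]
    obtain ⟨y, H1, H2⟩ := H (SkewTriv.mk σ 0 e)
    have key1 : ∀ z : SkewTriv R σ, z * SkewTriv.mk σ 0 e = 0 → ∃ w, z = w * y := by
      intro z hz
      have : z ∈ {z : SkewTriv R σ | z * SkewTriv.mk σ 0 e = 0} := hz
      rw [H1] at this
      exact this
    have key1' : ∀ z : SkewTriv R σ, (∃ w, z = w * y) → z * SkewTriv.mk σ 0 e = 0 := by
      intro z hz
      have : z ∈ {z : SkewTriv R σ | ∃ w, z = w * y} := hz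
      rw [← H1] at this
      exact this
    have key2 : ∀ z : SkewTriv R σ, z * y = 0 → ∃ w, z = w * SkewTriv.mk σ 0 e := by
      intro z hz
      have : z ∈ {z : SkewTriv R σ | z * y = 0} := hz
      rw [H2] at this
      exact this
    -- y annihilates x, so y.1 * e = 0
    have hy := key1' y ⟨1, (one_mul y).symm⟩
    rw [SkewTriv.mul_eq_zero_iff] at hy
    have hbe : y.1 * e = 0 := by
      have h := hy.2
      simp only [SkewTriv.mk, map_zero, mul_zero, add_zero] at h
      exact h
    -- (1 - e, 0) annihilates x, hence is a multiple of y
    have h1e : (SkewTriv.mk σ (1 - e) 0) * SkewTriv.mk σ 0 e = 0 := by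
      rw [SkewTriv.mul_eq_zero_iff]
      refine ⟨by simp [SkewTriv.mk], ?_⟩
      show (1 - e) * e + 0 * σ 0 = 0
      linear_combination -idem e
    obtain ⟨w, hw⟩ := key1 _ h1e
    rw [SkewTriv.eq_mul_iff] at hw
    have hw1 : (1 : R) - e = w.1 * y.1 := hw.1
    -- y.1 = 1 - e
    have hb : y.1 = 1 - e := by
      linear_combination (y.1 - 1) * hw1 + w.1 * idem y.1 + hbe
    -- (0, 1) annihilates x, hence is a multiple of y
    have h01 : (SkewTriv.mk σ 0 1) * SkewTriv.mk σ 0 e = 0 := by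
      rw [SkewTriv.mul_eq_zero_iff]
      refine ⟨by simp [SkewTriv.mk], ?_⟩
      show (0 : R) * e + 1 * σ 0 = 0
      simp
    obtain ⟨v, hv⟩ := key1 _ h01
    rw [SkewTriv.eq_mul_iff] at hv
    have hv1 : (0 : R) = v.1 * y.1 := hv.1
    have hv2 : (1 : R) = v.1 * y.2 + v.2 * σ y.1 := hv.2
    rw [hb] at hv1 hv2
    rw [map_sub, map_one] at hv2
    have hv1' : v.1 * e = v.1 := by linear_combination hv1
    have hf1 : v.1 * y.2 * σ e = σ e := by
      linear_combination (-σ e) * hv2 + v.2 * idem (σ e)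
    have hA : e * σ e = σ e := by
      linear_combination (y.2 * σ e) * hv1' + (1 - e) * hf1
    have hB : y.2 * σ e = σ e := by
      linear_combination (v.1 * σ e) * idem y.2 + (1 - y.2) * hf1
    -- (e - e σe, (e - e σe) y.2) annihilates y
    have hzy : (SkewTriv.mk σ (e - e * σ e) ((e - e * σ e) * y.2)) * y = 0 := by
      rw [SkewTriv.mul_eq_zero_iff, hb, map_sub, map_one]
      constructor
      · show (e - e * σ e) * (1 - e) = 0
        linear_combination (σ e - 1) * idem e
      · show (e - e * σ e) * y.2 + (e - e * σ e) * y.2 * (1 - σ e) = 0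
        linear_combination BooleanRing.add_self ((e - e * σ e) * y.2) + e * idem (σ e)
          + (e * σ e - e) * hB
    obtain ⟨u, hu⟩ := key2 _ hzy
    rw [SkewTriv.eq_mul_iff] at hu
    have hz : e - e * σ e = 0 := by
      have h := hu.1
      simp only [SkewTriv.mk, mul_zero] at h
      exact h
    linear_combination -hz - hA
  · rintro rfl
    intro x
    refine ⟨SkewTriv.mk _ (1 - (x.1 + x.2 - x.2 * x.1)) (x.2 - x.2 * x.1), ?_, ?_⟩
    · ext z
      simp only [Set.mem_setOf_eq]
      constructor
      · intro hz
        rw [SkewTriv.mul_eq_zero_iff] at hz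
        obtain ⟨h1, h2⟩ := hz
        simp only [RingHom.id_apply] at h2
        have za2 : z.2 * x.1 = 0 := by
          linear_combination x.1 * h2 - x.2 * h1 - z.2 * idem x.1
        have zm0 : z.1 * x.2 = 0 := by linear_combination h2 - za2
        have hz1q : z.1 * (x.1 + x.2 - x.2 * x.1) = 0 := by
          linear_combination h1 + zm0 - x.1 * zm0
        refine ⟨SkewTriv.mk _ (z.1 + z.2 * (x.1 + x.2 - x.2 * x.1)) z.2, ?_⟩
        rw [SkewTriv.eq_mul_iff]
        constructor
        · show z.1 = (z.1 + z.2 * (x.1 + x.2 - x.2 * x.1)) * (1 - (x.1 + x.2 - x.2 * x.1))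
          linear_combination hz1q + z.2 * idem (x.1 + x.2 - x.2 * x.1)
        · show z.2 = (z.1 + z.2 * (x.1 + x.2 - x.2 * x.1)) * (x.2 - x.2 * x.1)
            + z.2 * RingHom.id R ((1 : R) - (x.1 + x.2 - x.2 * x.1))
          simp only [RingHom.id_apply]
          linear_combination (x.1 - 1) * zm0
            - z.2 * (1 - x.1) * (1 - x.1) * idem x.2 + za2
      · rintro ⟨w, rfl⟩
        rw [mul_assoc]
        have hyx : SkewTriv.mk (RingHom.id R) (1 - (x.1 + x.2 - x.2 * x.1))
            (x.2 - x.2 * x.1) * x = 0 := by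
          rw [SkewTriv.mul_eq_zero_iff]
          constructor
          · show (1 - (x.1 + x.2 - x.2 * x.1)) * x.1 = 0
            linear_combination (x.2 - 1) * idem x.1
          · show (1 - (x.1 + x.2 - x.2 * x.1)) * x.2
              + (x.2 - x.2 * x.1) * RingHom.id R x.1 = 0
            simp only [RingHom.id_apply]
            linear_combination (x.1 - 1) * idem x.2 - x.2 * idem x.1
        rw [hyx, mul_zero]
    · ext z
      simp only [Set.mem_setOf_eq]
      constructor
      · intro hz
        rw [SkewTriv.mul_eq_zero_iff] at hz
        obtain ⟨h1, h2⟩ := hz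
        simp only [RingHom.id_apply] at h1 h2
        have h1 : z.1 * (1 - (x.1 + x.2 - x.2 * x.1)) = 0 := h1
        have h2 : z.1 * (x.2 - x.2 * x.1) + z.2 * (1 - (x.1 + x.2 - x.2 * x.1)) = 0 := h2
        have hz2 : z.2 * (1 - (x.1 + x.2 - x.2 * x.1)) = 0 := by
          linear_combination (1 - (x.1 + x.2 - x.2 * x.1)) * h2
            + z.1 * (1 - x.1) * (1 - x.1) * idem x.2
            - z.2 * idem (x.1 + x.2 - x.2 * x.1)
        have hz1mm : z.1 * (x.2 - x.2 * x.1) = 0 := by linear_combination h2 - hz2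
        have hz1a : z.1 * x.1 = z.1 := by linear_combination -h1 - hz1mm
        refine ⟨SkewTriv.mk _ (z.1 + z.2 - z.2 * x.1) (z.2 - z.1 * x.2), ?_⟩
        rw [SkewTriv.eq_mul_iff]
        constructor
        · show z.1 = (z.1 + z.2 - z.2 * x.1) * x.1
          linear_combination -hz1a + z.2 * idem x.1
        · show z.2 = (z.1 + z.2 - z.2 * x.1) * x.2 + (z.2 - z.1 * x.2) * RingHom.id R x.1
          simp only [RingHom.id_apply]
          linear_combination hz2 - hz1mm
      · rintro ⟨w, rfl⟩
        rw [mul_assoc]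
        have hxy : x * SkewTriv.mk (RingHom.id R) (1 - (x.1 + x.2 - x.2 * x.1))
            (x.2 - x.2 * x.1) = 0 := by
          rw [SkewTriv.mul_eq_zero_iff]
          constructor
          · show x.1 * (1 - (x.1 + x.2 - x.2 * x.1)) = 0
            linear_combination (x.2 - 1) * idem x.1
          · show x.1 * (x.2 - x.2 * x.1)
              + x.2 * RingHom.id R ((1:R) - (x.1 + x.2 - x.2 * x.1)) = 0
            simp only [RingHom.id_apply]
            linear_combination (x.1 - 1) * idem x.2 - x.2 * idem x.1
        rw [hxy, mul_zero]
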